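/- Thompson's quandle P has exactly two orbits, namely [p_0] and [p_1] = [p_2] = ⋯; equivalently, for any trivial quandle S (where x ▷ y = y), evaluation at (p_0, p_1) gives a bijection between quandle morphisms P → S and S × S. -/

import Mathlib

open Quandles

universe u v w

/-- `(P, p)` is a model of the quandle presented by generators `p 0, p 1, p 2, …` and
relations `p j ◃ p k = p (k+1)` for all `j < k` (Thompson's quandle): the relations hold
and the universal property of the presentation is satisfied. -/
structure IsThompsonQuandle (P : Type v) [Quandle P] (p : ℕ → P) : Prop where
  rel : ∀ ⦃j k : ℕ⦄, j < k → p j ◃ p k = p (k + 1)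
  lift : ∀ (Q : Type u) [Quandle Q] (q : ℕ → Q),
    (∀ ⦃j k : ℕ⦄, j < k → q j ◃ q k = q (k + 1)) →
    ∃! f : P →◃ Q, ∀ n, f (p n) = q n

/-- Thompson's quandle `P` has exactly two orbits `[p 0]` and `[p 1] = [p 2] = ⋯`:
equivalently, for any trivial quandle `S` (where `x ◃ y = y`), evaluation at `(p 0, p 1)`
is a bijection between quandle morphisms `P → S` and `S × S`. -/
theorem thompson_two_orbits {P : Type v} [Quandle P] {p : ℕ → P}
    (hP : IsThompsonQuandle.{u} P p)
    (S : Type u) [Quandle S] (hS : ∀ x y : S, x ◃ y = y) :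
    Function.Bijective (fun f : P →◃ S => (f (p 0), f (p 1))) := by
  constructor
  · intro f g hfg
    have hfg0 : f (p 0) = g (p 0) := congrArg Prod.fst hfg
    have hfg1 : f (p 1) = g (p 1) := congrArg Prod.snd hfg
    -- any morphism into a trivial quandle is constant on p 1, p 2, …
    have hc : ∀ (h : P →◃ S) (n : ℕ), h (p (n + 1)) = h (p 1) := by
      intro h n
      induction n with
      | zero => rfl
      | succ m ih =>
        have : p 0 ◃ p (m + 1) = p (m + 2) := hP.rel (Nat.succ_pos m)
        calc h (p (m + 2)) = h (p 0 ◃ p (m + 1)) := by rw [this]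
          _ = h (p 0) ◃ h (p (m + 1)) := h.map_act
          _ = h (p (m + 1)) := hS _ _
          _ = h (p 1) := ih
    have key : ∀ n, g (p n) = f (p n) := by
      intro n
      cases n with
      | zero => exact hfg0.symm
      | succ m => rw [hc f m, hc g m, hfg1]
    set q : ℕ → S := fun n => f (p n) with hq
    have hrel : ∀ ⦃j k : ℕ⦄, j < k → q j ◃ q k = q (k + 1) := by
      intro j k hjk
      have : p j ◃ p k = p (k + 1) := hP.rel hjk
      simp only [hq, hS]
      rw [← this]
      calc f (p k) = f (p j) ◃ f (p k) := (hS _ _).symm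
        _ = f (p j ◃ p k) := (f.map_act).symm
    obtain ⟨F, hF, hFu⟩ := hP.lift S q hrel
    have hf : f = F := hFu f (fun n => rfl)
    have hg : g = F := hFu g key
    rw [hf, hg]
  · rintro ⟨a, b⟩
    set q : ℕ → S := fun n => if n = 0 then a else b with hq
    have hrel : ∀ ⦃j k : ℕ⦄, j < k → q j ◃ q k = q (k + 1) := by
      intro j k hjk
      have hk : k ≠ 0 := Nat.ne_zero_of_lt hjk
      simp [hq, hS, hk]
    obtain ⟨F, hF, _⟩ := hP.lift S q hrel
    refine ⟨F, ?_⟩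
    simp [hF 0, hF 1, hq]
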